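/- Let X be a pure d-dimensional finite simplicial complex. Every minimal collection of k-cochains α₁,…,α_m ∈ C^k(X; F₂) is locally minimal; that is, for every simplex σ of X the localized collection I_σ(α₁),…,I_σ(α_m) is a minimal collection in the link X_σ. -/

import Mathlib

/-- A finite (abstract) simplicial complex on vertex set `V`, given by its finite,
downward-closed set of faces (including the empty face when nonempty). -/
structure SComplex (V : Type) where
  faces : Finset (Finset V)
  down_closed : ∀ s ∈ faces, ∀ t ⊆ s, t ∈ faces

namespace SComplex

variable {V : Type} [DecidableEq V]

/-- `K` is pure of dimension `d`: every face has at most `d+1` vertices and is contained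
in a face with exactly `d+1` vertices. -/
def IsPure (K : SComplex V) (d : ℕ) : Prop :=
  ∀ s ∈ K.faces, s.card ≤ d + 1 ∧ ∃ t ∈ K.faces, t.card = d + 1 ∧ s ⊆ t

/-- The weight of a face `s` of a (pure `d`-dimensional) complex:
`w(s) = #{τ ∈ X_d : s ⊆ τ} / (C(d+1, |s|) · |X_d|)`. -/
noncomputable def wt (K : SComplex V) (d : ℕ) (s : Finset V) : ℝ :=
  ((K.faces.filter fun t => t.card = d + 1 ∧ s ⊆ t).card : ℝ) /
    (((d + 1).choose s.card : ℝ) * ((K.faces.filter fun t => t.card = d + 1).card : ℝ))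

/-- The norm of an `F₂`-cochain, identified with its support (a finite set of faces):
the sum of the weights of the cells in the support. -/
noncomputable def nrm (K : SComplex V) (d : ℕ) (α : Finset (Finset V)) : ℝ :=
  ∑ s ∈ α, K.wt d s

/-- `α` is (the support of) a cochain living on the faces of `K` with `c` vertices
(i.e. a `(c-1)`-dimensional cochain). -/
def IsCochainOn (K : SComplex V) (c : ℕ) (α : Finset (Finset V)) : Prop :=
  ∀ s ∈ α, s ∈ K.faces ∧ s.card = c

/-- The simplicial coboundary over `F₂` of a cochain `α` supported on faces with `c`
vertices: the faces with `c+1` vertices containing an odd number of elements of `α`. -/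
def cobd (K : SComplex V) (c : ℕ) (α : Finset (Finset V)) : Finset (Finset V) :=
  K.faces.filter fun t => t.card = c + 1 ∧ (α.filter fun s => s ⊆ t).card % 2 = 1

/-- `β` is a coboundary among the cochains on faces with `c+1` vertices (i.e. a
`c`-dimensional coboundary, the complex being augmented by `X₋₁ = {∅}`). -/
def IsCobOn (K : SComplex V) (c : ℕ) (β : Finset (Finset V)) : Prop :=
  ∃ γ, K.IsCochainOn c γ ∧ K.cobd c γ = β

/-- The union of the supports of a finite family of cochains. -/
def unionF {m : ℕ} (f : Fin m → Finset (Finset V)) : Finset (Finset V) :=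
  Finset.univ.biUnion f

/-- A collection `α₁, …, α_m` of `k`-cochains is minimal if
`‖⋃ α_a‖ ≤ ‖⋃ (α_a + γ_a)‖` for every collection `γ₁, …, γ_m` of `k`-coboundaries. -/
def IsMinimalCol (K : SComplex V) (d k : ℕ) {m : ℕ} (α : Fin m → Finset (Finset V)) : Prop :=
  ∀ γ : Fin m → Finset (Finset V), (∀ a, K.IsCobOn k (γ a)) →
    K.nrm d (unionF α) ≤ K.nrm d (unionF fun a => symmDiff (α a) (γ a))

/-- The link of a simplex `σ`. -/
def link (K : SComplex V) (σ : Finset V) : SComplex V where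
  faces := K.faces.filter fun τ => τ ∩ σ = ∅ ∧ τ ∪ σ ∈ K.faces
  down_closed := by
    intro s hs t ht
    simp only [Finset.mem_filter] at hs ⊢
    refine ⟨K.down_closed s hs.1 t ht, ?_, ?_⟩
    · exact Finset.subset_empty.mp (hs.2.1 ▸ Finset.inter_subset_inter ht (le_refl σ))
    · exact K.down_closed (s ∪ σ) hs.2.2 (t ∪ σ) (Finset.union_subset_union ht (le_refl σ))

/-- Localization of a cochain to the link of `σ`: `I_σ(α) = { s \ σ : s ∈ α, σ ⊆ s }`. -/
def locz (σ : Finset V) (α : Finset (Finset V)) : Finset (Finset V) :=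
  (α.filter fun s => σ ⊆ s).image fun s => s \ σ

/-- Lifting of a cochain from the link of `σ`: `I^σ(β) = { τ ∪ σ : τ ∈ β }`. -/
def liftz (σ : Finset V) (β : Finset (Finset V)) : Finset (Finset V) :=
  β.image fun τ => τ ∪ σ

/-- A collection of `k`-cochains is locally minimal if all its localizations to links are
minimal collections (in the link, with the link's weight function). -/
def IsLocMinimalCol (K : SComplex V) (d k : ℕ) {m : ℕ}
    (α : Fin m → Finset (Finset V)) : Prop :=
  ∀ σ ∈ K.faces,
    IsMinimalCol (K.link σ) (d - σ.card) (k - σ.card) (fun a => locz σ (α a))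

/-- `K` is a `ρ`-skeleton expander: `‖E(A,A)‖ ≤ 4(‖A‖² + ρ‖A‖)` for every set `A` of
vertices. -/
def SkelExpander (K : SComplex V) (d : ℕ) (ρ : ℝ) : Prop :=
  ∀ A : Finset V, (∀ v ∈ A, ({v} : Finset V) ∈ K.faces) →
    K.nrm d (K.faces.filter fun e => e.card = 2 ∧ e ⊆ A) ≤
      4 * ((K.nrm d (A.image fun v => ({v} : Finset V))) ^ 2 +
        ρ * K.nrm d (A.image fun v => ({v} : Finset V)))

/-- The `k`-th collective cofilling constant of `K` (w.r.t. the weight function of a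
`d`-dimensional complex) is at most `μ`: every finite collection of nonzero
`(k+1)`-coboundaries `β₁, …, β_m` admits `k`-cochains `γ₁, …, γ_m` with `δγ_a = β_a` and
`‖⋃ γ_a‖ ≤ μ ‖⋃ β_a‖`. -/
def CollCofillLE (K : SComplex V) (d k : ℕ) (μ : ℝ) : Prop :=
  ∀ (m : ℕ) (β : Fin m → Finset (Finset V)),
    (∀ a, (β a).Nonempty ∧ K.IsCobOn (k + 1) (β a)) →
    ∃ γ : Fin m → Finset (Finset V),
      (∀ a, K.IsCochainOn (k + 1) (γ a) ∧ K.cobd (k + 1) (γ a) = β a) ∧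
      K.nrm d (unionF γ) ≤ μ * K.nrm d (unionF β)


/-! ### Auxiliary lemmas -/

lemma wt_nonneg (K : SComplex V) (d : ℕ) (s : Finset V) : 0 ≤ K.wt d s := by
  unfold wt; positivity

lemma nrm_nonneg (K : SComplex V) (d : ℕ) (α : Finset (Finset V)) : 0 ≤ K.nrm d α :=
  Finset.sum_nonneg fun s _ => K.wt_nonneg d s

lemma nrm_mono (K : SComplex V) (d : ℕ) {α β : Finset (Finset V)} (h : α ⊆ β) :
    K.nrm d α ≤ K.nrm d β :=
  Finset.sum_le_sum_of_subset_of_nonneg h fun s _ _ => K.wt_nonneg d s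

lemma mem_locz {σ τ : Finset V} {A : Finset (Finset V)} :
    τ ∈ locz σ A ↔ τ ∩ σ = ∅ ∧ τ ∪ σ ∈ A := by
  simp only [locz, Finset.mem_image, Finset.mem_filter]
  constructor
  · rintro ⟨s, ⟨hs, hσs⟩, rfl⟩
    exact ⟨Finset.sdiff_inter_self σ s, by rwa [Finset.sdiff_union_of_subset hσs]⟩
  · rintro ⟨h1, h2⟩
    exact ⟨τ ∪ σ, ⟨h2, Finset.subset_union_right⟩,
      Finset.union_sdiff_cancel_right (Finset.disjoint_iff_inter_eq_empty.mpr h1)⟩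

lemma locz_symmDiff (σ : Finset V) (A B : Finset (Finset V)) :
    locz σ (symmDiff A B) = symmDiff (locz σ A) (locz σ B) := by
  ext τ
  simp only [mem_locz, Finset.mem_symmDiff]
  tauto

lemma locz_unionF {m : ℕ} (σ : Finset V) (f : Fin m → Finset (Finset V)) :
    locz σ (unionF f) = unionF fun a => locz σ (f a) := by
  ext τ
  simp only [mem_locz, unionF, Finset.mem_biUnion, Finset.mem_univ, true_and]
  tauto

lemma mem_link {K : SComplex V} {σ τ : Finset V} :
    τ ∈ (K.link σ).faces ↔ τ ∈ K.faces ∧ τ ∩ σ = ∅ ∧ τ ∪ σ ∈ K.faces := by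
  simp [link, Finset.mem_filter]

lemma card_link_top (K : SComplex V) {σ : Finset V} {d : ℕ} (hc : σ.card ≤ d)
    (τ : Finset V) (hτσ : τ ∩ σ = ∅) :
    ((K.link σ).faces.filter fun u => u.card = (d - σ.card) + 1 ∧ τ ⊆ u).card
      = (K.faces.filter fun t => t.card = d + 1 ∧ σ ∪ τ ⊆ t).card := by
  apply Finset.card_bij (fun u _ => u ∪ σ)
  · intro u hu
    simp only [Finset.mem_filter, mem_link] at hu ⊢
    obtain ⟨⟨hu1, hu2, hu3⟩, hcard, hτu⟩ := hu
    have hd : (u ∪ σ).card = u.card + σ.card :=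
      Finset.card_union_of_disjoint (Finset.disjoint_iff_inter_eq_empty.mpr hu2)
    refine ⟨hu3, by omega, Finset.union_subset Finset.subset_union_right
      (hτu.trans Finset.subset_union_left)⟩
  · intro u1 hu1 u2 hu2 he
    simp only [Finset.mem_filter, mem_link] at hu1 hu2
    have e1 : (u1 ∪ σ) \ σ = u1 :=
      Finset.union_sdiff_cancel_right (Finset.disjoint_iff_inter_eq_empty.mpr hu1.1.2.1)
    have e2 : (u2 ∪ σ) \ σ = u2 :=
      Finset.union_sdiff_cancel_right (Finset.disjoint_iff_inter_eq_empty.mpr hu2.1.2.1)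
    rw [← e1, ← e2, he]
  · intro t ht
    simp only [Finset.mem_filter] at ht
    obtain ⟨htK, htc, hst⟩ := ht
    have hσt : σ ⊆ t := Finset.union_subset_iff.mp hst |>.1
    have hτt : τ ⊆ t := Finset.union_subset_iff.mp hst |>.2
    have hus : (t \ σ) ∪ σ = t := Finset.sdiff_union_of_subset hσt
    refine ⟨t \ σ, ?_, hus⟩
    simp only [Finset.mem_filter, mem_link]
    have hcd : (t \ σ).card = t.card - σ.card := Finset.card_sdiff_of_subset hσt
    refine ⟨⟨K.down_closed t htK _ (Finset.sdiff_subset), Finset.sdiff_inter_self σ t,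
      by rwa [hus]⟩, by omega, fun x hx => ?_⟩
    have hxt : x ∈ t := hτt hx
    have hxσ : x ∉ σ := fun hxσ => by
      have : x ∈ τ ∩ σ := Finset.mem_inter.mpr ⟨hx, hxσ⟩
      simp [hτσ] at this
    exact Finset.mem_sdiff.mpr ⟨hxt, hxσ⟩

lemma wt_link (K : SComplex V) {σ : Finset V} {d : ℕ} (hc : σ.card ≤ d)
    (τ : Finset V) (hτσ : τ ∩ σ = ∅) :
    (K.link σ).wt (d - σ.card) τ
      = ((K.faces.filter fun t => t.card = d + 1 ∧ σ ∪ τ ⊆ t).card : ℝ) /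
        ((((d - σ.card) + 1).choose τ.card : ℝ) *
          ((K.faces.filter fun t => t.card = d + 1 ∧ σ ⊆ t).card : ℝ)) := by
  unfold wt
  rw [card_link_top K hc τ hτσ]
  congr 3
  have h := card_link_top K hc ∅ (by simp)
  simpa using h
end SComplex

open SComplex in
/-- **Minimal collections are locally minimal** (Lemma 4.5(1) of Kaufman–Tessler): in a
pure `d`-dimensional finite simplicial complex, every minimal collection of `k`-cochains
is locally minimal. -/
theorem minimal_is_locally_minimal {V : Type} [DecidableEq V] (K : SComplex V)
    (d k : ℕ) (hpure : K.IsPure d) {m : ℕ} (α : Fin m → Finset (Finset V))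
    (hα : ∀ a, K.IsCochainOn (k + 1) (α a))
    (hmin : IsMinimalCol K d k α) :
    IsLocMinimalCol K d k α := by
  intro σ hσ γ' hγ'
  by_cases hck : k < σ.card
  · -- degenerate case: `σ` has more than `k` vertices
    apply nrm_mono
    intro t ht
    simp only [unionF, Finset.mem_biUnion, Finset.mem_univ, true_and] at ht ⊢
    obtain ⟨a, ha⟩ := ht
    refine ⟨a, Finset.mem_symmDiff.mpr (Or.inl ⟨ha, fun hg => ?_⟩)⟩
    -- t has card 0 but elements of γ' a have card (k - σ.card) + 1
    obtain ⟨h1, h2⟩ := mem_locz.mp ha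
    have hcard : (t ∪ σ).card = k + 1 := ((hα a) _ h2).2
    have hdu : (t ∪ σ).card = t.card + σ.card :=
      Finset.card_union_of_disjoint (Finset.disjoint_iff_inter_eq_empty.mpr h1)
    obtain ⟨η, hη, hcb⟩ := hγ' a
    rw [← hcb] at hg
    simp only [cobd, Finset.mem_filter] at hg
    omega
  push_neg at hck
  by_cases hkd : d < k
  · -- degenerate case: k exceeds the dimension, so all link coboundaries vanish
    have hγ'empty : ∀ a, γ' a = ∅ := by
      intro a
      obtain ⟨η, hη, hcb⟩ := hγ' a
      rw [← hcb]
      unfold cobd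
      rw [Finset.filter_eq_empty_iff]
      rintro u hu ⟨hcard, -⟩
      obtain ⟨hu1, hu2, hu3⟩ := mem_link.mp hu
      have h2 := (hpure (u ∪ σ) hu3).1
      have hcu : (u ∪ σ).card = u.card + σ.card :=
        Finset.card_union_of_disjoint (Finset.disjoint_iff_inter_eq_empty.mpr hu2)
      omega
    have he : (fun a => symmDiff (locz σ (α a)) (γ' a)) = fun a => locz σ (α a) := by
      funext a; rw [hγ'empty a]; simp
    rw [he]
  push_neg at hkd
  -- main case : σ.card ≤ k ≤ d
  have hcd : σ.card ≤ d := hck.trans hkd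
  choose η hηc hηcb using hγ'
  set γ : Fin m → Finset (Finset V) := fun a => K.cobd k (liftz σ (η a)) with hγdef
  -- the lifted cochains
  have hlift : ∀ a, K.IsCochainOn k (liftz σ (η a)) := by
    intro a s hs
    simp only [liftz, Finset.mem_image] at hs
    obtain ⟨τ, hτ, rfl⟩ := hs
    obtain ⟨hτL, hτc⟩ := hηc a τ hτ
    obtain ⟨h1, h2, h3⟩ := mem_link.mp hτL
    have : (τ ∪ σ).card = τ.card + σ.card :=
      Finset.card_union_of_disjoint (Finset.disjoint_iff_inter_eq_empty.mpr h2)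
    exact ⟨h3, by omega⟩
  have hKcob : ∀ a, K.IsCobOn k (γ a) := fun a => ⟨liftz σ (η a), hlift a, rfl⟩
  -- every cell of γ a contains σ
  have hγσ : ∀ a, ∀ t ∈ γ a, σ ⊆ t ∧ t ∈ K.faces ∧ t.card = k + 1 := by
    intro a t ht
    simp only [hγdef, cobd, Finset.mem_filter] at ht
    obtain ⟨htK, htc, hodd⟩ := ht
    have hne : ((liftz σ (η a)).filter fun s => s ⊆ t).Nonempty := by
      rw [Finset.nonempty_iff_ne_empty]
      intro h0
      rw [h0] at hodd
      simp at hodd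
    obtain ⟨s, hs⟩ := hne
    simp only [Finset.mem_filter, liftz, Finset.mem_image] at hs
    obtain ⟨⟨τ, hτ, rfl⟩, hst⟩ := hs
    exact ⟨Finset.subset_union_right.trans hst, htK, htc⟩
  -- localization of γ a is γ' a
  have hloczγ : ∀ a, locz σ (γ a) = γ' a := by
    intro a
    ext τ
    rw [mem_locz, ← hηcb a]
    simp only [hγdef, cobd, Finset.mem_filter, mem_link]
    have hcount : τ ∩ σ = ∅ →
        ((liftz σ (η a)).filter fun s => s ⊆ τ ∪ σ).card
          = ((η a).filter fun s => s ⊆ τ).card := by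
      intro hτσ
      unfold liftz
      rw [Finset.filter_image, Finset.card_image_of_injOn]
      · congr 1
        apply Finset.filter_congr
        intro s hs
        have hsσ : s ∩ σ = ∅ := (mem_link.mp (hηc a s hs).1).2.1
        constructor
        · intro h x hx
          have hxτσ : x ∈ τ ∪ σ := h (Finset.mem_union_left σ hx)
          have hxσ : x ∉ σ := fun hxσ => by
            have : x ∈ s ∩ σ := Finset.mem_inter.mpr ⟨hx, hxσ⟩
            simp [hsσ] at this
          rcases Finset.mem_union.mp hxτσ with h' | h'
          · exact h'
          · exact absurd h' hxσ
        · intro h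
          exact Finset.union_subset_union h (le_refl σ)
      · intro s1 hs1 s2 hs2 he
        have h1 : s1 ∩ σ = ∅ :=
          (mem_link.mp (hηc a s1 (Finset.mem_filter.mp hs1).1).1).2.1
        have h2 : s2 ∩ σ = ∅ :=
          (mem_link.mp (hηc a s2 (Finset.mem_filter.mp hs2).1).1).2.1
        have e1 : (s1 ∪ σ) \ σ = s1 :=
          Finset.union_sdiff_cancel_right (Finset.disjoint_iff_inter_eq_empty.mpr h1)
        have e2 : (s2 ∪ σ) \ σ = s2 :=
          Finset.union_sdiff_cancel_right (Finset.disjoint_iff_inter_eq_empty.mpr h2)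
        rw [← e1, ← e2]
        exact congrArg (· \ σ) he
    constructor
    · rintro ⟨hτσ, hK, hc, hodd⟩
      have hdu : (τ ∪ σ).card = τ.card + σ.card :=
        Finset.card_union_of_disjoint (Finset.disjoint_iff_inter_eq_empty.mpr hτσ)
      rw [hcount hτσ] at hodd
      exact ⟨⟨K.down_closed _ hK τ Finset.subset_union_left, hτσ, hK⟩, by omega, hodd⟩
    · rintro ⟨⟨hτK, hτσ, hτuK⟩, hc, hodd⟩
      have hdu : (τ ∪ σ).card = τ.card + σ.card :=
        Finset.card_union_of_disjoint (Finset.disjoint_iff_inter_eq_empty.mpr hτσ)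
      rw [← hcount hτσ] at hodd
      exact ⟨hτσ, hτuK, by omega, hodd⟩
  -- counting constants
  obtain ⟨tσ, htσK, htσc, hσtσ⟩ := (hpure σ hσ).2
  set N : ℝ := ((K.faces.filter fun t => t.card = d + 1).card : ℝ) with hN
  set Nσ : ℝ := ((K.faces.filter fun t => t.card = d + 1 ∧ σ ⊆ t).card : ℝ) with hNσ
  have hNpos : 0 < N := by
    rw [hN]
    have : tσ ∈ K.faces.filter fun t => t.card = d + 1 := Finset.mem_filter.mpr ⟨htσK, htσc⟩
    exact_mod_cast Finset.card_pos.mpr ⟨tσ, this⟩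
  have hNσpos : 0 < Nσ := by
    rw [hNσ]
    have : tσ ∈ K.faces.filter fun t => t.card = d + 1 ∧ σ ⊆ t :=
      Finset.mem_filter.mpr ⟨htσK, htσc, hσtσ⟩
    exact_mod_cast Finset.card_pos.mpr ⟨tσ, this⟩
  have hCpos : (0 : ℝ) < ((d + 1).choose (k + 1) : ℝ) := by
    exact_mod_cast Nat.choose_pos (by omega)
  have hC'pos : (0 : ℝ) < (((d - σ.card) + 1).choose ((k - σ.card) + 1) : ℝ) := by
    exact_mod_cast Nat.choose_pos (by omega)
  set Cf : ℝ := (((d + 1).choose (k + 1) : ℝ) * N) /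
      ((((d - σ.card) + 1).choose ((k - σ.card) + 1) : ℝ) * Nσ) with hCf
  have hCfpos : 0 < Cf := by
    rw [hCf]; positivity
  -- relating the norm of a localized cochain to the norm in K
  have hnrm : ∀ A : Finset (Finset V), (∀ t ∈ A, t.card = k + 1) →
      (K.link σ).nrm (d - σ.card) (locz σ A)
        = Cf * K.nrm d (A.filter fun t => σ ⊆ t) := by
    intro A hA
    unfold nrm locz
    rw [Finset.sum_image]
    · rw [Finset.mul_sum]
      apply Finset.sum_congr rfl
      intro t ht
      obtain ⟨htA, hσt⟩ := Finset.mem_filter.mp ht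
      have h1 : (t \ σ) ∩ σ = ∅ := Finset.sdiff_inter_self σ t
      rw [wt_link K hcd _ h1]
      rw [Finset.union_sdiff_of_subset hσt]
      have hcds : (t \ σ).card = (k - σ.card) + 1 := by
        have := Finset.card_sdiff_of_subset hσt
        have := Finset.card_le_card hσt
        have := hA t htA
        omega
      rw [hcds]
      unfold wt
      rw [hA t htA, hCf, ← hN]
      have eNσ : ((K.faces.filter fun t' => t'.card = d + 1 ∧ σ ⊆ t').card : ℝ) = Nσ := rfl
      rw [eNσ]
      have e1 : (((d + 1).choose (k + 1) : ℕ) : ℝ) ≠ 0 := hCpos.ne'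
      have e2 : N ≠ 0 := hNpos.ne'
      have e3 : ((((d - σ.card) + 1).choose ((k - σ.card) + 1) : ℕ) : ℝ) ≠ 0 := hC'pos.ne'
      have e4 : Nσ ≠ 0 := hNσpos.ne'
      field_simp
    · intro t1 ht1 t2 ht2 he
      have h1 := (Finset.mem_filter.mp ht1).2
      have h2 := (Finset.mem_filter.mp ht2).2
      rw [← Finset.sdiff_union_of_subset h1, ← Finset.sdiff_union_of_subset h2, show t1 \ σ = t2 \ σ from he]
  -- apply minimality in K
  have hmin' := hmin γ hKcob
  -- cardinality facts about the union cells
  have hαcells : ∀ t ∈ unionF α, t.card = k + 1 := by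
    intro t ht
    simp only [unionF, Finset.mem_biUnion] at ht
    obtain ⟨a, -, ha⟩ := ht
    exact ((hα a) t ha).2
  have hscells : ∀ t ∈ unionF fun a => symmDiff (α a) (γ a), t.card = k + 1 := by
    intro t ht
    simp only [unionF, Finset.mem_biUnion] at ht
    obtain ⟨a, -, ha⟩ := ht
    rcases Finset.mem_symmDiff.mp ha with ⟨h, -⟩ | ⟨h, -⟩
    · exact ((hα a) t h).2
    · exact (hγσ a t h).2.2
  -- parts away from σ coincide
  have houtside : ((unionF α).filter fun t => ¬ σ ⊆ t)
      = ((unionF fun a => symmDiff (α a) (γ a)).filter fun t => ¬ σ ⊆ t) := by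
    ext t
    simp only [Finset.mem_filter, unionF, Finset.mem_biUnion, Finset.mem_univ, true_and]
    constructor
    · rintro ⟨⟨a, ha⟩, hnσ⟩
      exact ⟨⟨a, Finset.mem_symmDiff.mpr (Or.inl ⟨ha, fun hg => hnσ (hγσ a t hg).1⟩)⟩, hnσ⟩
    · rintro ⟨⟨a, ha⟩, hnσ⟩
      rcases Finset.mem_symmDiff.mp ha with ⟨h, -⟩ | ⟨h, -⟩
      · exact ⟨⟨a, h⟩, hnσ⟩
      · exact absurd (hγσ a t h).1 hnσ
  -- split hmin' along σ-containment
  have hsplit1 : K.nrm d (unionF α)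
      = K.nrm d ((unionF α).filter fun t => σ ⊆ t)
        + K.nrm d ((unionF α).filter fun t => ¬ σ ⊆ t) :=
    (Finset.sum_filter_add_sum_filter_not _ _ _).symm
  have hsplit2 : K.nrm d (unionF fun a => symmDiff (α a) (γ a))
      = K.nrm d ((unionF fun a => symmDiff (α a) (γ a)).filter fun t => σ ⊆ t)
        + K.nrm d ((unionF fun a => symmDiff (α a) (γ a)).filter fun t => ¬ σ ⊆ t) :=
    (Finset.sum_filter_add_sum_filter_not _ _ _).symm
  have hP : K.nrm d ((unionF α).filter fun t => σ ⊆ t)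
      ≤ K.nrm d ((unionF fun a => symmDiff (α a) (γ a)).filter fun t => σ ⊆ t) := by
    rw [hsplit1, hsplit2, houtside] at hmin'
    linarith
  -- identify both sides
  have hL : (K.link σ).nrm (d - σ.card) (unionF fun a => locz σ (α a))
      = Cf * K.nrm d ((unionF α).filter fun t => σ ⊆ t) := by
    rw [← locz_unionF]
    exact hnrm _ hαcells
  have hR : (K.link σ).nrm (d - σ.card) (unionF fun a => symmDiff (locz σ (α a)) (γ' a))
      = Cf * K.nrm d ((unionF fun a => symmDiff (α a) (γ a)).filter fun t => σ ⊆ t) := by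
    have : (fun a => symmDiff (locz σ (α a)) (γ' a))
        = fun a => locz σ (symmDiff (α a) (γ a)) := by
      funext a
      rw [locz_symmDiff, hloczγ a]
    rw [this, ← locz_unionF]
    exact hnrm _ hscells
  rw [hL, hR]
  exact mul_le_mul_of_nonneg_left hP hCfpos.le
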